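/- arXiv:1702.04225 — 2 statements merged into one kernel-verified Lean document; each statement's English description precedes it below -/
import Mathlib

section
/- Let G be a group generated by a finite set S, equipped with the word metric d_S, and let H ≤ G be a subgroup. Let A ≥ 0 and let C be a deep, irreducible (1,A)-coarse complementary component of H such that G \ C is also deep. If H' := {h ∈ H : h·(C \ N_A(H)) = C \ N_A(H)} is the stabilizer in H of C \ N_A(H) under left multiplication, then e(G,H') > 1. -/
open Metric Set
open scoped NNReal Pointwise

/-- The closed `r`-neighbourhood `N_r(A)` of a subset `A` of a metric space. -/
def nbhd {X : Type*} [PseudoMetricSpace X] (r : ℝ≥0) (A : Set X) : Set X :=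
  {x : X | ∃ a ∈ A, nndist x a ≤ r}

/-- The word length of `g` with respect to a generating set `S`: the least `n` such
that `g` is a product of `n` elements of `S ∪ S⁻¹`. -/
noncomputable def wordLength {G : Type*} [Group G] (S : Set G) (g : G) : ℕ :=
  sInf {n : ℕ | ∃ l : List G, (∀ x ∈ l, x ∈ S ∨ x⁻¹ ∈ S) ∧ l.prod = g ∧ l.length = n}

/-- The metric on `G` is the word metric with respect to `S`. -/
def IsWordMetric {G : Type*} [Group G] [MetricSpace G] (S : Set G) : Prop :=
  ∀ g h : G, dist g h = wordLength S (g⁻¹ * h)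

/-- A subset `A ⊆ G` is `H`-finite if `A ⊆ H·R` for some finite `R ⊆ G`. -/
def HFinite {G : Type*} [Group G] (H : Subgroup G) (A : Set G) : Prop :=
  ∃ R : Set G, R.Finite ∧ A ⊆ (H : Set G) * R

/-- The coarse `r`-boundary `∂_r C := {x ∈ X \ C : d(x,C) ≤ r}`. -/
def coarseBoundary {X : Type*} [PseudoMetricSpace X] (r : ℝ≥0) (C : Set X) : Set X :=
  {x : X | x ∉ C ∧ ∃ c ∈ C, nndist x c ≤ r}

/-- `C` is an `(r,A)`-coarse complementary component of `W`:
`∂_r (C \ N_A(W)) ⊆ N_A(W)`. -/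
def IsCCC {X : Type*} [PseudoMetricSpace X] (r A : ℝ≥0) (W C : Set X) : Prop :=
  coarseBoundary r (C \ nbhd A W) ⊆ nbhd A W

/-- `C` is a coarse complementary component of `W`, i.e. an `(r,A)`-coarse complementary
component for some `r ≥ 1`, `A ≥ 0`. -/
def IsCoarseCompComplement {X : Type*} [PseudoMetricSpace X] (W C : Set X) : Prop :=
  ∃ r A : ℝ≥0, 1 ≤ r ∧ IsCCC r A W C

/-- A coarse complementary component is shallow if contained in some neighbourhood of
`W`, and deep otherwise. -/
def IsShallow {X : Type*} [PseudoMetricSpace X] (W C : Set X) : Prop :=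
  ∃ R : ℝ≥0, C ⊆ nbhd R W

/-- The right coset space `H\G`. -/
abbrev RightCoset {G : Type*} [Group G] (H : Subgroup G) :=
  Quotient (QuotientGroup.rightRel H)

/-- Right translation `Hx ↦ Hxg` on the right coset space `H\G`. -/
def rcosMul {G : Type*} [Group G] (H : Subgroup G) (g : G) :
    RightCoset H → RightCoset H :=
  Quotient.map' (fun x => x * g) (by
    intro a b hab
    rw [QuotientGroup.rightRel_apply] at hab ⊢
    simpa [mul_inv_rev, mul_assoc] using hab)

/-- `F(H\G)`: the subspace of `P(H\G) = (H\G → ℤ/2)` consisting of (indicator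
functions of) finite subsets of `H\G`. -/
def finiteSupport (α : Type*) : Submodule (ZMod 2) (α → ZMod 2) where
  carrier := {f | {a : α | f a ≠ 0}.Finite}
  add_mem' := by
    rintro f g hf hg
    refine (hf.union hg).subset ?_
    intro a ha
    by_contra h
    simp only [Set.mem_union, Set.mem_setOf_eq, not_or, not_not] at h
    exact ha (by simp [Set.mem_setOf_eq, Pi.add_apply, h.1, h.2])
  zero_mem' := by
    have : {a : α | (0 : α → ZMod 2) a ≠ 0} = ∅ := by
      ext a; simp
    simp only [Set.mem_setOf_eq, this]
    exact Set.finite_empty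
  smul_mem' := by
    intro c f hf
    refine hf.subset ?_
    intro a ha
    by_contra h
    simp only [Set.mem_setOf_eq, not_not] at h
    exact ha (by simp [Set.mem_setOf_eq, Pi.smul_apply, h])

lemma rcosMul_rcosMul {G : Type*} [Group G] (H : Subgroup G) (g g' : G)
    (q : RightCoset H) : rcosMul H g (rcosMul H g' q) = rcosMul H (g' * g) q := by
  induction q using Quotient.inductionOn' with
  | h x => simp [rcosMul, Quotient.map'_mk'', mul_assoc]

lemma rcosMul_injective {G : Type*} [Group G] (H : Subgroup G) (g : G) :
    Function.Injective (rcosMul H g) := by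
  apply Function.LeftInverse.injective (g := rcosMul H g⁻¹)
  intro q
  rw [rcosMul_rcosMul]
  induction q using Quotient.inductionOn' with
  | h x => simp [rcosMul, Quotient.map'_mk'']

/-- The right-translation action `C ↦ Cg` of `g ∈ G` on `P(H\G)/F(H\G)`. -/
noncomputable def endsMap {G : Type*} [Group G] (H : Subgroup G) (g : G) :
    ((RightCoset H → ZMod 2) ⧸ finiteSupport (RightCoset H)) →ₗ[ZMod 2]
      ((RightCoset H → ZMod 2) ⧸ finiteSupport (RightCoset H)) :=
  Submodule.mapQ _ _ (LinearMap.funLeft (ZMod 2) (ZMod 2) (rcosMul H g⁻¹))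
    (by
      intro f hf
      have : {c : RightCoset H | f (rcosMul H g⁻¹ c) ≠ 0} =
          rcosMul H g⁻¹ ⁻¹' {c : RightCoset H | f c ≠ 0} := rfl
      show {c : RightCoset H | f (rcosMul H g⁻¹ c) ≠ 0}.Finite
      rw [this]
      exact Set.Finite.preimage (rcosMul_injective H g⁻¹).injOn hf)

/-- The subspace of `G`-fixed vectors of `P(H\G)/F(H\G)`; its `ℤ/2`-dimension is the
number of relative ends `e(G,H)` of Houghton and Scott. -/
noncomputable def endsFixed {G : Type*} [Group G] (H : Subgroup G) :
    Submodule (ZMod 2) ((RightCoset H → ZMod 2) ⧸ finiteSupport (RightCoset H)) where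
  carrier := {v | ∀ g : G, endsMap H g v = v}
  add_mem' := by
    intro u v hu hv g
    rw [map_add, hu g, hv g]
  zero_mem' := by
    intro g
    exact map_zero _
  smul_mem' := by
    intro c v hv g
    rw [map_smul, hv g]

/-- The graph whose vertex set is `G \ N_A(W)` and in which distinct vertices `x, y`
are adjacent iff `d(x,y) ≤ r`. -/
def complementGraph {X : Type*} [PseudoMetricSpace X] (r A : ℝ≥0) (W : Set X) :
    SimpleGraph {x : X // x ∉ nbhd A W} where
  Adj u v := u ≠ v ∧ nndist (u : X) (v : X) ≤ r
  symm := by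
    refine ⟨?_⟩
    intro u v h
    exact ⟨h.1.symm, by rw [nndist_comm]; exact h.2⟩
  loopless := by
    refine ⟨?_⟩
    intro u h
    exact h.1 rfl

/-- `C` is an irreducible `(r,A)`-coarse complementary component of `W`: it is an
`(r,A)`-coarse complementary component and `C \ N_A(W)` is the vertex set of a single
connected component of the graph on `X \ N_A(W)` with adjacency `d(x,y) ≤ r`. -/
def IsIrreducibleCCC {X : Type*} [PseudoMetricSpace X] (r A : ℝ≥0) (W C : Set X) :
    Prop :=
  IsCCC r A W C ∧ ∃ u : {x : X // x ∉ nbhd A W}, (u : X) ∈ C ∧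
    ∀ v : {x : X // x ∉ nbhd A W},
      ((v : X) ∈ C ↔ (complementGraph r A W).Reachable u v)

section Helpers

set_option linter.unusedSectionVars false

open Metric Set
open scoped NNReal Pointwise

variable {G : Type*} [Group G] [MetricSpace G] {S : Set G}

lemma wordLength_le_one {s : G} (hs : s ∈ S ∨ s⁻¹ ∈ S) : wordLength S s ≤ 1 :=
  Nat.sInf_le ⟨[s], by simpa using hs, by simp, by simp⟩

lemma dist_mul_left' (hword : IsWordMetric S) (k x y : G) :
    dist (k * x) (k * y) = dist x y := by
  have h : (k * x)⁻¹ * (k * y) = x⁻¹ * y := by group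
  rw [hword, hword, h]

lemma nndist_mul_left' (hword : IsWordMetric S) (k x y : G) :
    nndist (k * x) (k * y) = nndist x y := by
  apply NNReal.coe_injective
  simp only [coe_nndist]
  exact dist_mul_left' hword k x y

lemma nndist_gen_le_one (hword : IsWordMetric S) {s : G} (hs : s ∈ S ∨ s⁻¹ ∈ S) (x : G) :
    nndist x (x * s) ≤ 1 := by
  rw [← NNReal.coe_le_coe]
  simp only [coe_nndist]
  have h : x⁻¹ * (x * s) = s := by group
  rw [hword, h]
  have := wordLength_le_one hs
  push_cast
  exact_mod_cast this

lemma mem_nbhd_self' {X : Type*} [PseudoMetricSpace X] {W : Set X} {r : ℝ≥0} {x : X}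
    (h : x ∈ W) : x ∈ nbhd r W :=
  ⟨x, h, by simp⟩

lemma nbhd_mono' {X : Type*} [PseudoMetricSpace X] {W : Set X} {r r' : ℝ≥0} (h : r ≤ r') :
    nbhd r W ⊆ nbhd r' W := fun _ ⟨a, ha, hd⟩ => ⟨a, ha, hd.trans h⟩

lemma mem_nbhd_trans' {X : Type*} [PseudoMetricSpace X] {W : Set X} {r s : ℝ≥0} {x y : X}
    (hxy : nndist x y ≤ s) (hy : y ∈ nbhd r W) : x ∈ nbhd (s + r) W := by
  obtain ⟨a, ha, hd⟩ := hy
  exact ⟨a, ha, (nndist_triangle x y a).trans (add_le_add hxy hd)⟩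

lemma finite_bounded_lists {α : Type*} {T : Set α} (hT : T.Finite) :
    ∀ N : ℕ, {l : List α | (∀ x ∈ l, x ∈ T) ∧ l.length ≤ N}.Finite := by
  intro N
  induction N with
  | zero =>
    apply Set.Finite.subset (Set.finite_singleton ([] : List α))
    rintro l ⟨-, hlen⟩
    simp [List.length_eq_zero_iff.mp (Nat.le_zero.mp hlen)]
  | succ N ih =>
    apply Set.Finite.subset (((hT.prod ih).image fun p => p.1 :: p.2).insert [])
    rintro l ⟨hmem, hlen⟩
    cases l with
    | nil => exact Set.mem_insert _ _
    | cons a t =>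
      refine Set.mem_insert_of_mem _ ⟨(a, t), ⟨hmem a (by simp), ?_⟩, rfl⟩
      exact ⟨fun x hx => hmem x (by simp [hx]), Nat.succ_le_succ_iff.mp (by simpa using hlen)⟩

lemma exists_word (hSgen : Subgroup.closure S = ⊤) (x : G) :
    ∃ l : List G, (∀ y ∈ l, y ∈ S ∨ y⁻¹ ∈ S) ∧ l.prod = x ∧ l.length = wordLength S x := by
  have hx : x ∈ Subgroup.closure S := by rw [hSgen]; trivial
  have hx' : x ∈ Submonoid.closure (S ∪ S⁻¹) := by
    rw [← Subgroup.closure_toSubmonoid]; exact hx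
  obtain ⟨l, h1, h2⟩ := Submonoid.exists_list_of_mem_closure hx'
  have hne : {n : ℕ | ∃ l : List G, (∀ y ∈ l, y ∈ S ∨ y⁻¹ ∈ S) ∧ l.prod = x ∧ l.length = n}.Nonempty :=
    ⟨l.length, l, fun y hy => (h1 y hy).imp id Set.mem_inv.mp, h2, rfl⟩
  obtain ⟨l₀, hc, hp, hlen⟩ := Nat.sInf_mem hne
  exact ⟨l₀, hc, hp, hlen⟩

lemma nndist_one_eq (hword : IsWordMetric S) (x : G) :
    nndist 1 x = (wordLength S x : ℝ≥0) := by
  apply NNReal.coe_injective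
  simp [coe_nndist, hword 1 x]

lemma finite_word_ball (hSfin : S.Finite) (hSgen : Subgroup.closure S = ⊤)
    (hword : IsWordMetric S) (K : ℝ≥0) : {x : G | nndist 1 x ≤ K}.Finite := by
  apply Set.Finite.subset ((finite_bounded_lists (hSfin.union hSfin.inv) ⌊K⌋₊).image List.prod)
  intro x hx
  obtain ⟨l, hc, hp, hlen⟩ := exists_word hSgen x
  refine ⟨l, ⟨fun y hy => (hc y hy).imp id Set.mem_inv.mpr, ?_⟩, hp⟩
  have hw : ((wordLength S x : ℕ) : ℝ≥0) ≤ K := by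
    rw [← nndist_one_eq hword]; exact hx
  rw [hlen]
  exact Nat.le_floor hw

end Helpers

/-- Let `G` be a group with the word metric with respect to a finite
generating set `S` and `H ≤ G` a subgroup. Let `A ≥ 0` and let `C` be a deep,
irreducible `(1,A)`-coarse complementary component of `H` such that `G \ C` is also
deep. If `H'` is the stabilizer in `H` of `C \ N_A(H)` under left multiplication, then
`e(G,H') > 1`. -/
theorem ends_stabilizer_gt_one {G : Type*} [Group G] [MetricSpace G]
    (S : Set G) (hSfin : S.Finite) (hSgen : Subgroup.closure S = ⊤)
    (hword : IsWordMetric S) (H : Subgroup G) (A : ℝ≥0) (C : Set G)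
    (hirr : IsIrreducibleCCC 1 A (H : Set G) C)
    (hdeep : ¬ IsShallow (H : Set G) C)
    (hdeep' : ¬ IsShallow (H : Set G) Cᶜ) :
    (1 : Cardinal) < Module.rank (ZMod 2)
      ↥(endsFixed (H ⊓ MulAction.stabilizer G (C \ nbhd A (H : Set G)))) := by
  classical
  obtain ⟨hccc, u, huC, hcomp⟩ := hirr
  set C' : Set G := C \ nbhd A (H : Set G) with hC'def
  set H' : Subgroup G := H ⊓ MulAction.stabilizer G C' with hH'def
  have hH'H : ∀ h : G, h ∈ H' → h ∈ H := fun h hh => (Subgroup.mem_inf.mp hh).1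
  have hC'H' : ∀ h : G, h ∈ H' → ∀ x : G, h * x ∈ C' ↔ x ∈ C' := by
    intro h hh x
    have hst : h • C' = C' := (Subgroup.mem_inf.mp hh).2
    constructor
    · intro hx
      rw [← hst] at hx
      rwa [Set.mem_smul_set_iff_inv_smul_mem, smul_eq_mul, inv_mul_cancel_left] at hx
    · intro hx
      rw [← hst]
      rw [Set.mem_smul_set_iff_inv_smul_mem, smul_eq_mul, inv_mul_cancel_left]
      exact hx
  have hnbH : ∀ w : G, w ∈ H → ∀ (r : ℝ≥0) (x : G), x ∈ nbhd r (H : Set G) →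
      w * x ∈ nbhd r (H : Set G) := by
    rintro w hw r x ⟨a, ha, hd⟩
    exact ⟨w * a, H.mul_mem hw ha, by rwa [nndist_mul_left' hword]⟩
  have hnbH' : ∀ w : G, w ∈ H → ∀ (r : ℝ≥0) (x : G), x ∉ nbhd r (H : Set G) →
      w * x ∉ nbhd r (H : Set G) := by
    intro w hw r x hx hmem
    exact hx (by simpa [inv_mul_cancel_left] using hnbH w⁻¹ (H.inv_mem hw) r (w * x) hmem)
  have hreach : ∀ w : G, w ∈ H → ∀ (x y : G) (hx : x ∉ nbhd A (H : Set G))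
      (hy : y ∉ nbhd A (H : Set G)) (hx' : w * x ∉ nbhd A (H : Set G))
      (hy' : w * y ∉ nbhd A (H : Set G)),
      (complementGraph 1 A (H : Set G)).Reachable ⟨x, hx⟩ ⟨y, hy⟩ →
      (complementGraph 1 A (H : Set G)).Reachable ⟨w * x, hx'⟩ ⟨w * y, hy'⟩ := by
    intro w hw x y hx hy hx' hy' hr
    let φ : complementGraph 1 A (H : Set G) →g complementGraph 1 A (H : Set G) :=
      { toFun := fun v => ⟨w * (v : G), hnbH' w hw A v v.2⟩
        map_rel' := by
          rintro a b ⟨hne, hd⟩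
          refine ⟨fun e => hne ?_, ?_⟩
          · have he : w * (a : G) = w * (b : G) := congrArg Subtype.val e
            exact Subtype.ext (mul_left_cancel he)
          · simpa [nndist_mul_left' hword] using hd }
    exact hr.map φ
  have hmemC : ∀ (x : G) (hx : x ∉ nbhd A (H : Set G)),
      x ∈ C' ↔ (complementGraph 1 A (H : Set G)).Reachable u ⟨x, hx⟩ := by
    intro x hx
    constructor
    · intro h; exact (hcomp ⟨x, hx⟩).mp h.1
    · intro h; exact ⟨(hcomp ⟨x, hx⟩).mpr h, hx⟩
  have hdir : ∀ a b p : G, a ∈ H → b ∈ H → p ∉ nbhd A (H : Set G) →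
      a * p ∈ C' → b * p ∈ C' → ∀ z : G, z ∈ C' → (b * a⁻¹) * z ∈ C' := by
    intro a b p ha hb hp hap hbp z hz
    have hzn : z ∉ nbhd A (H : Set G) := hz.2
    have hw : b * a⁻¹ ∈ H := H.mul_mem hb (H.inv_mem ha)
    have hapn : a * p ∉ nbhd A (H : Set G) := hap.2
    have hbpn : b * p ∉ nbhd A (H : Set G) := hbp.2
    have hwzn : (b * a⁻¹) * z ∉ nbhd A (H : Set G) := hnbH' _ hw A z hzn
    have hwapn : (b * a⁻¹) * (a * p) ∉ nbhd A (H : Set G) := hnbH' _ hw A _ hapn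
    have r1 := (hmemC z hzn).mp hz
    have r2 := (hmemC _ hapn).mp hap
    have r3 := r2.symm.trans r1
    have r4 := hreach _ hw (a * p) z hapn hzn hwapn hwzn r3
    have heq : (⟨(b * a⁻¹) * (a * p), hwapn⟩ : {x : G // x ∉ nbhd A (H : Set G)}) = ⟨b * p, hbpn⟩ :=
      Subtype.ext (by group)
    rw [heq] at r4
    have r5 := (hmemC _ hbpn).mp hbp
    exact (hmemC _ hwzn).mpr (r5.trans r4)
  have hstab : ∀ a b p : G, a ∈ H → b ∈ H → p ∉ nbhd A (H : Set G) →
      a * p ∈ C' → b * p ∈ C' → a * b⁻¹ ∈ H' := by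
    intro a b p ha hb hp hap hbp
    rw [hH'def]
    refine Subgroup.mem_inf.mpr ⟨H.mul_mem ha (H.inv_mem hb), ?_⟩
    rw [MulAction.mem_stabilizer_iff]
    ext z
    rw [Set.mem_smul_set_iff_inv_smul_mem]
    have hsm : (a * b⁻¹)⁻¹ • z = (b * a⁻¹) * z := by
      simp [smul_eq_mul, mul_inv_rev]
    rw [hsm]
    constructor
    · intro h
      have h2 := hdir b a p hb ha hp hbp hap _ h
      rwa [show (a * b⁻¹) * ((b * a⁻¹) * z) = z by group] at h2
    · exact hdir a b p ha hb hp hap hbp z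
  have hpath : ∀ l : List G, (∀ s ∈ l, s ∈ S ∨ s⁻¹ ∈ S) → ∀ x : G, x ∈ C' →
      x * l.prod ∉ C' → x ∈ nbhd (A + (l.length : ℝ≥0)) (H : Set G) := by
    intro l
    induction l with
    | nil =>
      intro _ x hx hx'
      simp only [List.prod_nil, mul_one] at hx'
      exact absurd hx hx'
    | cons s t ih =>
      intro hcond x hx hx'
      have hlen : A + (((s :: t).length : ℕ) : ℝ≥0) = 1 + (A + ((t.length : ℕ) : ℝ≥0)) := by
        push_cast [List.length_cons]
        ring
      rw [hlen]
      have hdist1 : nndist x (x * s) ≤ 1 := nndist_gen_le_one hword (hcond s (by simp)) x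
      by_cases h1 : x * s ∈ nbhd A (H : Set G)
      · refine nbhd_mono' ?_ (mem_nbhd_trans' hdist1 h1)
        exact add_le_add (le_refl 1) le_self_add
      · by_cases h2 : x * s ∈ C'
        · have hx'' : (x * s) * t.prod ∉ C' := by rwa [mul_assoc, ← List.prod_cons]
          exact mem_nbhd_trans' hdist1 (ih (fun y hy => hcond y (by simp [hy])) (x * s) h2 hx'')
        · exfalso
          apply h1
          apply hccc
          exact ⟨h2, x, hx, by rw [nndist_comm]; exact hdist1⟩
  have hHfin : ∀ K : ℝ≥0, ∃ T : Set G, T.Finite ∧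
      ∀ x : G, x ∈ C' → x ∈ nbhd K (H : Set G) → x ∈ (H' : Set G) * T := by
    intro K
    have hBfin : {p : G | nndist 1 p ≤ K}.Finite := finite_word_ball hSfin hSgen hword K
    set f : G → G := fun p => if hc : ∃ h : G, h ∈ H ∧ h * p ∈ C' then hc.choose * p else 1
      with hfdef
    refine ⟨f '' {p : G | nndist 1 p ≤ K}, hBfin.image f, ?_⟩
    rintro x hx ⟨h, hh, hd⟩
    have hhH : h ∈ H := hh
    set p : G := h⁻¹ * x with hpdef
    have hhp : h * p = x := by rw [hpdef, mul_inv_cancel_left]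
    have hpB : p ∈ {p : G | nndist 1 p ≤ K} := by
      have heq : nndist 1 p = nndist h x := by
        have h2 := nndist_mul_left' hword h 1 p
        rw [mul_one, hhp] at h2
        exact h2.symm
      rw [Set.mem_setOf_eq, heq, nndist_comm]
      exact hd
    have hc : ∃ h' : G, h' ∈ H ∧ h' * p ∈ C' := ⟨h, hhH, by rwa [hhp]⟩
    have hpn : p ∉ nbhd A (H : Set G) := by
      intro hmem
      exact hx.2 (by simpa [hhp] using hnbH h hhH A p hmem)
    obtain ⟨h0H, h0C⟩ := hc.choose_spec
    have hu : h * hc.choose⁻¹ ∈ H' := hstab h hc.choose p hhH h0H hpn (by rwa [hhp]) h0C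
    have hfp : f p = hc.choose * p := dif_pos hc
    have hxeq : (h * hc.choose⁻¹) * (hc.choose * p) = x := by rw [← hhp]; group
    rw [← hxeq]
    exact Set.mul_mem_mul hu ⟨p, hpB, hfp⟩
  -- the indicator function of the image of C' in H'\G
  let χ : RightCoset H' → ZMod 2 := fun q =>
    Quotient.liftOn' q (fun x => if x ∈ C' then (1 : ZMod 2) else 0) (by
      intro a b hab
      have hm : b * a⁻¹ ∈ H' := QuotientGroup.rightRel_apply.mp hab
      have hiff : b ∈ C' ↔ a ∈ C' := by
        have h2 := hC'H' _ hm a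
        rwa [show (b * a⁻¹) * a = b by group] at h2
      exact if_congr hiff.symm rfl rfl)
  have hχmk : ∀ x : G, χ (Quotient.mk'' x) = if x ∈ C' then (1 : ZMod 2) else 0 := fun _ => rfl
  have hrcos : ∀ (g x : G), rcosMul H' g (Quotient.mk'' x) = Quotient.mk'' (x * g) :=
    fun g x => Quotient.map'_mk'' _ _ x
  have hcoset : ∀ x y : G, y * x⁻¹ ∈ H' →
      (Quotient.mk'' x : RightCoset H') = Quotient.mk'' y :=
    fun x y h => Quotient.sound' (QuotientGroup.rightRel_apply.mpr h)
  have halm : ∀ g : G, {q : RightCoset H' | χ (rcosMul H' g⁻¹ q) ≠ χ q}.Finite := by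
    intro g
    obtain ⟨l, hl, hlp, -⟩ := exists_word hSgen g
    set l' : List G := (l.map fun y => y⁻¹).reverse with hl'def
    have hl'cond : ∀ s ∈ l', s ∈ S ∨ s⁻¹ ∈ S := by
      intro s hs
      rw [hl'def, List.mem_reverse, List.mem_map] at hs
      obtain ⟨y, hy, rfl⟩ := hs
      rcases hl y hy with h | h
      · exact Or.inr (by rwa [inv_inv])
      · exact Or.inl h
    have hl'p : l'.prod = g⁻¹ := by rw [hl'def, ← List.prod_inv_reverse, hlp]
    have hl'len : l'.length = l.length := by simp [hl'def]
    obtain ⟨T₁, hT₁f, hT₁⟩ := hHfin (A + ((l'.length : ℕ) : ℝ≥0))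
    obtain ⟨T₂, hT₂f, hT₂⟩ := hHfin (A + ((l.length : ℕ) : ℝ≥0))
    apply Set.Finite.subset ((hT₁f.union (hT₂f.image (· * g))).image (Quotient.mk''))
    intro q hq
    set x : G := q.out with hxdef
    have hqx : (Quotient.mk'' x : RightCoset H') = q := Quotient.out_eq' q
    have hq' : (if x * g⁻¹ ∈ C' then (1 : ZMod 2) else 0) ≠
        (if x ∈ C' then (1 : ZMod 2) else 0) := by
      have h2 := hq
      rw [Set.mem_setOf_eq, ← hqx, hrcos, hχmk, hχmk] at h2
      exact h2
    by_cases hx : x ∈ C'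
    · have hxg : x * g⁻¹ ∉ C' := by
        intro hmem
        rw [if_pos hmem, if_pos hx] at hq'
        exact hq' rfl
      have hnb : x ∈ nbhd (A + ((l'.length : ℕ) : ℝ≥0)) (H : Set G) :=
        hpath l' hl'cond x hx (by rwa [hl'p])
      obtain ⟨h, hh, t, ht, hht⟩ := Set.mem_mul.mp (hT₁ x hx hnb)
      refine ⟨t, Or.inl ht, ?_⟩
      rw [← hqx]
      refine hcoset t x ?_
      rw [← hht, mul_inv_cancel_right]
      exact hh
    · have hxg : x * g⁻¹ ∈ C' := by
        by_contra hmem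
        rw [if_neg hmem, if_neg hx] at hq'
        exact hq' rfl
      have hret : (x * g⁻¹) * l.prod ∉ C' := by
        rw [hlp, inv_mul_cancel_right]; exact hx
      have hnb := hpath l hl (x * g⁻¹) hxg hret
      obtain ⟨h, hh, t, ht, hht⟩ := Set.mem_mul.mp (hT₂ (x * g⁻¹) hxg hnb)
      refine ⟨t * g, Or.inr ⟨t, ht, rfl⟩, ?_⟩
      rw [← hqx]
      refine hcoset (t * g) x ?_
      have hxeq : x = h * (t * g) := by rw [← mul_assoc, hht, inv_mul_cancel_right]
      rw [hxeq, mul_inv_cancel_right]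
      exact hh
  -- the two fixed vectors
  have hfix1 : ∀ g : G, endsMap H' g
      (Submodule.Quotient.mk (p := finiteSupport (RightCoset H')) (fun _ => (1 : ZMod 2))) =
      Submodule.Quotient.mk (p := finiteSupport (RightCoset H')) (fun _ => (1 : ZMod 2)) := by
    intro g
    unfold endsMap
    rw [Submodule.mapQ_apply]
    rfl
  have hfix2 : ∀ g : G, endsMap H' g
      (Submodule.Quotient.mk (p := finiteSupport (RightCoset H')) χ) =
      Submodule.Quotient.mk (p := finiteSupport (RightCoset H')) χ := by
    intro g
    unfold endsMap
    rw [Submodule.mapQ_apply, Submodule.Quotient.eq]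
    show {q : RightCoset H' |
        (LinearMap.funLeft (ZMod 2) (ZMod 2) (rcosMul H' g⁻¹) χ - χ) q ≠ 0}.Finite
    apply Set.Finite.subset (halm g)
    intro q hq
    rw [Set.mem_setOf_eq, Pi.sub_apply, LinearMap.funLeft_apply] at hq
    exact sub_ne_zero.mp hq
  have hfix1' : (Submodule.Quotient.mk (p := finiteSupport (RightCoset H'))
      (fun _ => (1 : ZMod 2))) ∈ endsFixed H' := hfix1
  have hfix2' : (Submodule.Quotient.mk (p := finiteSupport (RightCoset H')) χ) ∈
      endsFixed H' := hfix2
  -- deepness consequences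
  have hshallow : ∀ (Y : Set G) (Q : Set (RightCoset H')), Q.Finite →
      (∀ x ∈ Y, (Quotient.mk'' x : RightCoset H') ∈ Q) →
      ∃ K : ℝ≥0, Y ⊆ nbhd K (H : Set G) := by
    intro Y Q hQ hYQ
    obtain ⟨K, hK⟩ := ((hQ.image Quotient.out).image (fun t => nndist t 1)).bddAbove
    refine ⟨K, fun x hx => ?_⟩
    have hq : (Quotient.mk'' x : RightCoset H') ∈ Q := hYQ x hx
    set t : G := (Quotient.mk'' x : RightCoset H').out with htdef
    have hrel : x * t⁻¹ ∈ H' := by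
      have h2 : (Quotient.mk'' t : RightCoset H') = Quotient.mk'' x := Quotient.out_eq' _
      exact QuotientGroup.rightRel_apply.mp (Quotient.exact' h2)
    refine ⟨x * t⁻¹, hH'H _ hrel, ?_⟩
    have h1 : nndist x (x * t⁻¹) = nndist t 1 := by
      have h2 := nndist_mul_left' hword (x * t⁻¹) t 1
      rw [mul_one, show (x * t⁻¹) * t = x by group] at h2
      exact h2
    rw [h1]
    exact hK ⟨t, ⟨_, hq, rfl⟩, rfl⟩
  have hfin1 : ¬ {q : RightCoset H' | χ q ≠ 0}.Finite := by
    intro hQ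
    obtain ⟨K, hK⟩ := hshallow C' _ hQ (fun x hx => by
      simp only [Set.mem_setOf_eq, hχmk, if_pos hx]
      exact one_ne_zero)
    apply hdeep
    refine ⟨K ⊔ A, fun x hx => ?_⟩
    by_cases hxa : x ∈ nbhd A (H : Set G)
    · exact nbhd_mono' le_sup_right hxa
    · exact nbhd_mono' le_sup_left (hK ⟨hx, hxa⟩)
  have hfin0 : ¬ {q : RightCoset H' | χ q = 0}.Finite := by
    intro hQ
    obtain ⟨K, hK⟩ := hshallow Cᶜ _ hQ (fun x hx => by
      have hxn : x ∉ C' := fun h => hx h.1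
      simp only [Set.mem_setOf_eq, hχmk, if_neg hxn])
    exact hdeep' ⟨K, hK⟩
  -- nonvanishing
  have hv2 : (Submodule.Quotient.mk (p := finiteSupport (RightCoset H')) χ) ≠ 0 := by
    intro h
    rw [Submodule.Quotient.mk_eq_zero] at h
    exact hfin1 h
  have hv1 : (Submodule.Quotient.mk (p := finiteSupport (RightCoset H'))
      (fun _ => (1 : ZMod 2))) ≠ 0 := by
    intro h
    rw [Submodule.Quotient.mk_eq_zero] at h
    have huniv : (Set.univ : Set (RightCoset H')).Finite := by
      have hset : {q : RightCoset H' | (fun (_ : RightCoset H') => (1 : ZMod 2)) q ≠ 0} =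
          Set.univ := by
        ext q; simp
      rw [← hset]
      exact h
    exact hfin1 (huniv.subset (Set.subset_univ _))
  have hv12 : (Submodule.Quotient.mk (p := finiteSupport (RightCoset H'))
        (fun _ => (1 : ZMod 2))) +
      (Submodule.Quotient.mk (p := finiteSupport (RightCoset H')) χ) ≠ 0 := by
    intro h
    rw [← Submodule.Quotient.mk_add, Submodule.Quotient.mk_eq_zero] at h
    apply hfin0
    have hiff : ∀ a : ZMod 2, ¬(1 + a ≠ 0) ↔ ¬(a = 0) := by decide
    have hset : {q : RightCoset H' | (((fun _ => (1 : ZMod 2)) + χ : RightCoset H' → ZMod 2)) q ≠ 0} =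
        {q : RightCoset H' | χ q = 0} := by
      ext q
      simp only [Set.mem_setOf_eq, Pi.add_apply]
      exact not_iff_not.mp (hiff (χ q))
    rw [← hset]
    exact h
  -- linear independence and rank
  let w1 : ↥(endsFixed H') := ⟨_, hfix1'⟩
  let w2 : ↥(endsFixed H') := ⟨_, hfix2'⟩
  have hli : LinearIndependent (ZMod 2) ![w1, w2] := by
    rw [LinearIndependent.pair_iff]
    intro s t hst
    have hcases : ∀ a : ZMod 2, a = 0 ∨ a = 1 := by decide
    have hst' : s • (Submodule.Quotient.mk (p := finiteSupport (RightCoset H'))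
          (fun _ => (1 : ZMod 2))) +
        t • (Submodule.Quotient.mk (p := finiteSupport (RightCoset H')) χ) = 0 := by
      have h2 := congrArg Subtype.val hst
      simpa using h2
    rcases hcases s with hs | hs <;> rcases hcases t with ht | ht <;> subst hs <;> subst ht
    · exact ⟨rfl, rfl⟩
    · exact absurd (by simpa using hst') hv2
    · exact absurd (by simpa using hst') hv1
    · exact absurd (by simpa using hst') hv12
  have hcard := hli.cardinal_lift_le_rank
  rw [Cardinal.mk_fintype, Fintype.card_fin] at hcard
  have h2 : (2 : Cardinal) ≤ Module.rank (ZMod 2) ↥(endsFixed H') := by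
    simpa using hcard
  exact lt_of_lt_of_le (by norm_num) h2
end

section
/- Let G be a group generated by a finite set S, equipped with the word metric d_S, and let H ≤ G be a subgroup. Suppose there exist a constant A ≥ 0 and a coarse complementary component C of H such that both C and G \ C are deep, and for every g ∈ G either gH ⊆ C ∪ N_A(H) or gH ⊆ (G \ C) ∪ N_A(H). Then there exists a proper H-almost invariant set X ⊆ G such that XH = X. -/
open Metric Set
open scoped NNReal Pointwise

/-- A subset `C ⊆ G` is `H`-almost invariant if for every `g ∈ G` the symmetric
difference of `C` and `Cg` is `H`-finite. -/
def HAlmostInvariant {G : Type*} [Group G] (H : Subgroup G) (C : Set G) : Prop :=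
  ∀ g : G, HFinite H (symmDiff C ((fun x => x * g) '' C))

namespace Stmt19

variable {G : Type*} [Group G]

lemma wl_nonempty (S : Set G) (hSgen : Subgroup.closure S = ⊤) (g : G) :
    {n : ℕ | ∃ l : List G, (∀ x ∈ l, x ∈ S ∨ x⁻¹ ∈ S) ∧ l.prod = g ∧ l.length = n}.Nonempty := by
  have hg : g ∈ Submonoid.closure (S ∪ S⁻¹) := by
    rw [← Subgroup.closure_toSubmonoid, hSgen]; trivial
  obtain ⟨l, hl, hprod⟩ := Submonoid.exists_list_of_mem_closure hg
  refine ⟨l.length, l, fun x hx => ?_, hprod, rfl⟩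
  rcases hl x hx with h | h
  · exact Or.inl h
  · exact Or.inr (Set.mem_inv.mp h)

lemma wl_spec (S : Set G) (hSgen : Subgroup.closure S = ⊤) (g : G) :
    ∃ l : List G, (∀ x ∈ l, x ∈ S ∨ x⁻¹ ∈ S) ∧ l.prod = g ∧ l.length = wordLength S g :=
  Nat.sInf_mem (wl_nonempty S hSgen g)

lemma wl_le (S : Set G) {g : G} {l : List G} (hl : ∀ x ∈ l, x ∈ S ∨ x⁻¹ ∈ S)
    (hprod : l.prod = g) : wordLength S g ≤ l.length :=
  Nat.sInf_le ⟨l, hl, hprod, rfl⟩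

lemma wl_inv_le (S : Set G) (hSgen : Subgroup.closure S = ⊤) (g : G) :
    wordLength S g⁻¹ ≤ wordLength S g := by
  obtain ⟨l, hl, hprod, hlen⟩ := wl_spec S hSgen g
  have h1 : ((l.map fun x => x⁻¹).reverse).prod = g⁻¹ := by
    rw [← List.prod_inv_reverse, hprod]
  have h2 : ∀ x ∈ (l.map fun x => x⁻¹).reverse, x ∈ S ∨ x⁻¹ ∈ S := by
    intro x hx
    rw [List.mem_reverse, List.mem_map] at hx
    obtain ⟨y, hy, rfl⟩ := hx
    rcases hl y hy with h | h
    · exact Or.inr (by simpa using h)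
    · exact Or.inl h
  calc wordLength S g⁻¹ ≤ ((l.map fun x => x⁻¹).reverse).length := wl_le S h2 h1
    _ = wordLength S g := by simpa using hlen

lemma wl_inv (S : Set G) (hSgen : Subgroup.closure S = ⊤) (g : G) :
    wordLength S g⁻¹ = wordLength S g :=
  le_antisymm (wl_inv_le S hSgen g) (by simpa using wl_inv_le S hSgen g⁻¹)

lemma ball_finite (S : Set G) (hSfin : S.Finite) (hSgen : Subgroup.closure S = ⊤) (n : ℕ) :
    {g : G | wordLength S g ≤ n}.Finite := by
  induction n with
  | zero =>
    apply Set.Finite.subset (Set.finite_singleton 1)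
    intro g hg
    obtain ⟨l, _, hprod, hlen⟩ := wl_spec S hSgen g
    have hg' : wordLength S g ≤ 0 := hg
    have : l.length = 0 := by omega
    rw [List.length_eq_zero_iff] at this
    simp [Set.mem_singleton_iff, ← hprod, this]
  | succ n ih =>
    apply Set.Finite.subset (ih.mul ((Set.finite_singleton 1).union (hSfin.union hSfin.inv)))
    intro g hg
    obtain ⟨l, hl, hprod, hlen⟩ := wl_spec S hSgen g
    have hg' : wordLength S g ≤ n + 1 := hg
    rcases List.eq_nil_or_concat l with rfl | ⟨L, a, rfl⟩
    · have hgg : g = g * 1 := (mul_one g).symm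
      rw [hgg]
      refine Set.mul_mem_mul ?_ (Or.inl rfl)
      show wordLength S g ≤ n
      simp only [List.length_nil] at hlen
      omega
    · rw [List.concat_eq_append] at hl hprod hlen
      have hL : L.prod * a = g := by simpa using hprod
      have hwl : wordLength S L.prod ≤ n := by
        have h1 : wordLength S L.prod ≤ L.length :=
          wl_le S (fun x hx => hl x (List.mem_append_left _ hx)) rfl
        simp only [List.length_append, List.length_singleton] at hlen
        omega
      have ha : a ∈ ({1} : Set G) ∪ (S ∪ S⁻¹) := by
        rcases hl a (by simp) with h | h
        · exact Or.inr (Or.inl h)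
        · exact Or.inr (Or.inr (Set.mem_inv.mpr h))
      rw [← hL]
      exact Set.mul_mem_mul hwl ha

variable [MetricSpace G]

lemma nndist_eq {S : Set G} (hword : IsWordMetric S) (x y : G) :
    nndist x y = (wordLength S (x⁻¹ * y) : ℝ≥0) := by
  apply NNReal.coe_injective
  rw [coe_nndist, hword x y]
  simp

lemma nbhd_mono {W : Set G} {ρ ρ' : ℝ≥0} (h : ρ ≤ ρ') : nbhd ρ W ⊆ nbhd ρ' W := by
  rintro x ⟨w, hw, hd⟩
  exact ⟨w, hw, hd.trans h⟩

lemma mem_nbhd_trans {W : Set G} {ρ s : ℝ≥0} {x y : G} (hx : x ∈ nbhd ρ W)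
    (hd : nndist y x ≤ s) : y ∈ nbhd (ρ + s) W := by
  obtain ⟨w, hw, hxw⟩ := hx
  exact ⟨w, hw, (nndist_triangle y x w).trans (by rw [add_comm ρ s]; exact add_le_add hd hxw)⟩

lemma hfinite_mono {H : Subgroup G} {A B : Set G} (hAB : A ⊆ B) (hB : HFinite H B) :
    HFinite H A := by
  obtain ⟨R, hR, hsub⟩ := hB
  exact ⟨R, hR, hAB.trans hsub⟩

lemma hfinite_nbhd (S : Set G) (hSfin : S.Finite) (hSgen : Subgroup.closure S = ⊤)
    (hword : IsWordMetric S) (H : Subgroup G) (ρ : ℝ≥0) :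
    HFinite H (nbhd ρ (H : Set G)) := by
  refine ⟨{g : G | wordLength S g ≤ ⌈(ρ : ℝ)⌉₊}, ball_finite S hSfin hSgen _, ?_⟩
  rintro x ⟨h, hh, hd⟩
  have hx : x = h * (h⁻¹ * x) := by group
  rw [hx]
  refine Set.mul_mem_mul hh ?_
  · show wordLength S (h⁻¹ * x) ≤ _
    have : (wordLength S (x⁻¹ * h) : ℝ≥0) ≤ ρ := by rw [← nndist_eq hword]; exact hd
    have h2 : wordLength S (h⁻¹ * x) ≤ wordLength S (x⁻¹ * h) := by
      have := wl_inv_le S hSgen (x⁻¹ * h)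
      simpa using this
    have h3 : (wordLength S (x⁻¹ * h) : ℝ) ≤ ⌈(ρ : ℝ)⌉₊ :=
      le_trans (by exact_mod_cast this) (Nat.le_ceil _)
    exact le_trans h2 (by exact_mod_cast h3)


end Stmt19

namespace Stmt19

variable {G : Type*} [Group G] [MetricSpace G]

lemma crossing {S : Set G} (hSgen : Subgroup.closure S = ⊤) (hword : IsWordMetric S)
    {r A₀ : ℝ≥0} (hr : 1 ≤ r) {W C : Set G} (hccc : IsCCC r A₀ W C)
    {x y : G} (hx : x ∈ C) (hy : y ∉ C) :
    x ∈ nbhd (A₀ + wordLength S (x⁻¹ * y)) W := by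
  classical
  obtain ⟨l, hl, hprod, hlen⟩ := wl_spec S hSgen (x⁻¹ * y)
  set m := wordLength S (x⁻¹ * y) with hm
  set z : ℕ → G := fun i => x * (l.take i).prod with hz
  have hz0 : z 0 = x := by simp [hz]
  have hzm : z m = y := by
    have : l.take m = l := by rw [← hlen]; exact List.take_length
    simp only [hz, this, hprod]
    group
  have hdx : ∀ i : ℕ, nndist x (z i) ≤ (i : ℝ≥0) := by
    intro i
    rw [nndist_eq hword]
    have h1 : x⁻¹ * z i = (l.take i).prod := by
      simp only [hz]; group
    rw [h1]
    have h2 : wordLength S (l.take i).prod ≤ (l.take i).length :=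
      wl_le S (fun a ha => hl a (List.take_subset i l ha)) rfl
    have h3 : (l.take i).length ≤ i := by simp
    exact_mod_cast le_trans h2 h3
  have hstep : ∀ i : ℕ, i < m → nndist (z i) (z (i + 1)) ≤ 1 := by
    intro i hi
    have hi' : i < l.length := by omega
    rw [nndist_eq hword]
    have h1 : (z i)⁻¹ * z (i + 1) = l.get ⟨i, hi'⟩ := by
      simp only [hz]
      rw [List.prod_take_succ l i hi']
      simp only [List.get_eq_getElem]
      group
    rw [h1]
    have h2 : wordLength S (l.get ⟨i, hi'⟩) ≤ 1 := by
      refine wl_le S (l := [l.get ⟨i, hi'⟩]) ?_ (by simp)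
      intro a ha
      simp only [List.mem_singleton] at ha
      subst ha
      exact hl _ (l.get_mem _)
    exact_mod_cast h2
  have hPm : z m ∉ C \ nbhd A₀ W := by rw [hzm]; exact fun h => hy h.1
  have hex : ∃ i, z i ∉ C \ nbhd A₀ W := ⟨m, hPm⟩
  have hjle : Nat.find hex ≤ m := Nat.find_min' hex hPm
  have hspec := Nat.find_spec hex
  rcases hj : Nat.find hex with _ | k
  · rw [hj, hz0] at hspec
    have hxN : x ∈ nbhd A₀ W := by
      by_contra h'
      exact hspec ⟨hx, h'⟩
    exact nbhd_mono le_self_add hxN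
  · rw [hj] at hspec hjle
    have hk : z k ∈ C \ nbhd A₀ W := by
      by_contra h'
      have hle := Nat.find_min' hex h'
      rw [hj] at hle
      omega
    have hbd : z (k + 1) ∈ coarseBoundary r (C \ nbhd A₀ W) := by
      refine ⟨hspec, z k, hk, ?_⟩
      have := hstep k (by omega)
      have hsym : nndist (z (k+1)) (z k) = nndist (z k) (z (k+1)) := nndist_comm _ _
      rw [hsym]
      exact this.trans hr
    obtain ⟨w, hw, hzw⟩ := hccc hbd
    refine ⟨w, hw, ?_⟩
    calc nndist x w ≤ nndist x (z (k+1)) + nndist (z (k+1)) w := nndist_triangle _ _ _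
      _ ≤ ((k+1 : ℕ) : ℝ≥0) + A₀ := add_le_add (hdx (k+1)) hzw
      _ ≤ (m : ℝ≥0) + A₀ := by
          refine add_le_add_left ?_ _
          exact_mod_cast hjle
      _ = A₀ + m := add_comm _ _

lemma side_bound {S : Set G} (hSgen : Subgroup.closure S = ⊤) (hword : IsWordMetric S)
    {r A₀ A : ℝ≥0} (hr : 1 ≤ r) {W C : Set G} (hccc : IsCCC r A₀ W C)
    {x y : G} (hx : x ∈ C ∪ nbhd A W) (hy : y ∈ Cᶜ ∪ nbhd A W) :
    x ∈ nbhd (max A A₀ + wordLength S (x⁻¹ * y)) W := by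
  rcases hx with hx | hx
  · rcases hy with hy | hy
    · exact nbhd_mono (add_le_add_left (le_max_right _ _) _)
        (crossing hSgen hword hr hccc hx hy)
    · have hd : nndist x y ≤ (wordLength S (x⁻¹ * y) : ℝ≥0) := by
        rw [nndist_eq hword]
      have := mem_nbhd_trans hy hd
      exact nbhd_mono (add_le_add_left (le_max_left _ _) _) this
  · exact nbhd_mono (le_trans (le_max_left A A₀) le_self_add) hx

end Stmt19

namespace Stmt19
variable {G : Type*} [Group G] [MetricSpace G]

lemma hfinite_subset_nbhd {S : Set G} (hSgen : Subgroup.closure S = ⊤)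
    (hword : IsWordMetric S) {H : Subgroup G} {A : Set G} (hA : HFinite H A) :
    ∃ ρ : ℝ≥0, A ⊆ nbhd ρ (H : Set G) := by
  obtain ⟨R, hRfin, hsub⟩ := hA
  refine ⟨hRfin.toFinset.sup (fun g => (wordLength S g : ℝ≥0)), ?_⟩
  intro x hx
  obtain ⟨h, hh, t, ht, rfl⟩ := Set.mem_mul.mp (hsub hx)
  refine ⟨h, hh, ?_⟩
  have he : nndist (h * t) h = (wordLength S t : ℝ≥0) := by
    rw [nndist_eq hword]
    have h1 : (h * t)⁻¹ * h = t⁻¹ := by group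
    rw [h1, wl_inv S hSgen]
  rw [he]
  exact Finset.le_sup (f := fun g => (wordLength S g : ℝ≥0)) (hRfin.mem_toFinset.mpr ht)

end Stmt19

open Stmt19

/-- Let `G` be a group with the word metric with respect to a finite
generating set `S` and `H ≤ G` a subgroup. Suppose there are `A ≥ 0` and a coarse
complementary component `C` of `H` such that both `C` and `G \ C` are deep, and for
every `g ∈ G` either `gH ⊆ C ∪ N_A(H)` or `gH ⊆ (G \ C) ∪ N_A(H)`. Then there exists a
proper `H`-almost invariant set `X ⊆ G` with `XH = X`. -/
theorem exists_proper_almost_invariant {G : Type*} [Group G] [MetricSpace G]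
    (S : Set G) (hSfin : S.Finite) (hSgen : Subgroup.closure S = ⊤)
    (hword : IsWordMetric S) (H : Subgroup G) (A : ℝ≥0) (C : Set G)
    (hC : IsCoarseCompComplement (H : Set G) C)
    (hdeep : ¬ IsShallow (H : Set G) C) (hdeep' : ¬ IsShallow (H : Set G) Cᶜ)
    (hsplit : ∀ g : G, ((fun x => g * x) '' (H : Set G)) ⊆ C ∪ nbhd A (H : Set G) ∨
      ((fun x => g * x) '' (H : Set G)) ⊆ Cᶜ ∪ nbhd A (H : Set G)) :
    ∃ X : Set G, HAlmostInvariant H X ∧ ¬ HFinite H X ∧ ¬ HFinite H Xᶜ ∧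
      X * (H : Set G) = X := by
  classical
  obtain ⟨r, A₀, hr, hccc⟩ := hC
  set X : Set G := {x : G | ((fun y => x * y) '' (H : Set G)) ⊆ C ∪ nbhd A (H : Set G)}
    with hXdef
  have hself : ∀ x : G, x ∈ (fun y => x * y) '' (H : Set G) :=
    fun x => ⟨1, H.one_mem, mul_one x⟩
  have hmemX : ∀ x : G, x ∈ X → x ∈ C ∪ nbhd A (H : Set G) := fun x hx => hx (hself x)
  have hnotX : ∀ x : G, x ∉ X →
      ((fun y => x * y) '' (H : Set G)) ⊆ Cᶜ ∪ nbhd A (H : Set G) := by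
    intro x hx
    rcases hsplit x with h | h
    · exact absurd h hx
    · exact h
  refine ⟨X, ?_, ?_, ?_, ?_⟩
  · -- H-almost invariant
    intro g
    set m : ℕ := wordLength S g with hm
    set B : ℝ≥0 := (max A A₀ + m) + m with hB
    refine hfinite_mono ?_ (hfinite_nbhd S hSfin hSgen hword H B)
    intro x hx
    rw [Set.mem_symmDiff] at hx
    have hmem_img : ∀ u : G, u ∈ (fun t => t * g) '' X ↔ u * g⁻¹ ∈ X := by
      intro u
      constructor
      · rintro ⟨v, hv, rfl⟩; simpa using hv
      · intro h; exact ⟨u * g⁻¹, h, by group⟩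
    have hw1 : wordLength S (x⁻¹ * (x * g⁻¹)) = m := by
      have h1 : x⁻¹ * (x * g⁻¹) = g⁻¹ := by group
      rw [h1, wl_inv S hSgen, hm]
    have hw2 : wordLength S ((x * g⁻¹)⁻¹ * x) = m := by
      have h1 : (x * g⁻¹)⁻¹ * x = g := by group
      rw [h1, hm]
    rcases hx with ⟨hxX, hximg⟩ | ⟨hximg, hxX⟩
    · -- x ∈ X, x*g⁻¹ ∉ X
      have hyX : x * g⁻¹ ∉ X := fun h => hximg ((hmem_img x).mpr h)
      have hxC : x ∈ C ∪ nbhd A (H : Set G) := hmemX x hxX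
      have hyC : x * g⁻¹ ∈ Cᶜ ∪ nbhd A (H : Set G) := hnotX _ hyX (hself _)
      have := side_bound hSgen hword hr hccc hxC hyC
      rw [hw1] at this
      exact nbhd_mono (le_self_add) this
    · -- x ∈ img, x ∉ X
      have hyX : x * g⁻¹ ∈ X := (hmem_img x).mp hximg
      have hyC : x * g⁻¹ ∈ C ∪ nbhd A (H : Set G) := hmemX _ hyX
      have hxC : x ∈ Cᶜ ∪ nbhd A (H : Set G) := hnotX x hxX (hself x)
      have hy := side_bound hSgen hword hr hccc hyC hxC
      rw [hw2] at hy
      have hd : nndist x (x * g⁻¹) ≤ (m : ℝ≥0) := by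
        rw [nndist_eq hword, hw1]
      exact mem_nbhd_trans hy hd
  · -- X not H-finite
    intro hfin
    obtain ⟨ρ, hρ⟩ := hfinite_subset_nbhd hSgen hword hfin
    apply hdeep
    refine ⟨max ρ A, fun x hxC => ?_⟩
    by_cases hxX : x ∈ X
    · exact nbhd_mono (le_max_left _ _) (hρ hxX)
    · rcases hnotX x hxX (hself x) with h | h
      · exact absurd hxC h
      · exact nbhd_mono (le_max_right _ _) h
  · -- Xᶜ not H-finite
    intro hfin
    obtain ⟨ρ, hρ⟩ := hfinite_subset_nbhd hSgen hword hfin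
    apply hdeep'
    refine ⟨max ρ A, fun x hxC => ?_⟩
    by_cases hxX : x ∈ X
    · rcases hmemX x hxX with h | h
      · exact absurd h hxC
      · exact nbhd_mono (le_max_right _ _) h
    · exact nbhd_mono (le_max_left _ _) (hρ hxX)
  · -- X * H = X
    ext x
    constructor
    · intro hx
      obtain ⟨a, ha, h, hh, rfl⟩ := Set.mem_mul.mp hx
      intro w hw
      obtain ⟨k, hk, rfl⟩ := hw
      have : a * (h * k) ∈ C ∪ nbhd A (H : Set G) := ha ⟨h * k, H.mul_mem hh hk, rfl⟩
      simpa [mul_assoc] using this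
    · intro hx
      exact Set.mem_mul.mpr ⟨x, hx, 1, H.one_mem, mul_one x⟩
end
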